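/- arXiv:1706.04833 — 7 statements merged into one kernel-verified Lean document; each statement's English description precedes it below -/
import Mathlib

section
/- If 0 < α < 1 and f is holomorphic on the unit disk with sup_{z∈D} (1-|z|²)^α |f'(z)| < ∞, then f is bounded on the unit disk. -/
open Metric

/-- If `0 < α < 1` and `f ∈ B_α`, then `f` is bounded on the unit disk. -/
theorem bloch_type_subset_Hinfty (α : ℝ) (hα0 : 0 < α) (hα1 : α < 1)
    (f : ℂ → ℂ) (hf : DifferentiableOn ℂ f (ball (0 : ℂ) 1))
    (hfα : ∃ C : ℝ, ∀ z ∈ ball (0 : ℂ) 1,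
      (1 - ‖z‖ ^ 2) ^ α * ‖deriv f z‖ ≤ C) :
    ∃ C : ℝ, ∀ z ∈ ball (0 : ℂ) 1, ‖f z‖ ≤ C := by
  obtain ⟨C, hC⟩ := hfα
  have hC0 : 0 ≤ C := le_trans (mul_nonneg (Real.rpow_nonneg (by simp) α) (norm_nonneg _)) (hC 0 (by simp))
  refine ⟨‖f 0‖ + ∫ t in (0:ℝ)..1, C * (1 - t) ^ (-α), ?_⟩
  intro z hz
  have hz1 : ‖z‖ < 1 := by simpa using hz
  have hmem : ∀ t : ℝ, t ∈ Set.Icc (0:ℝ) 1 → (↑t * z) ∈ ball (0:ℂ) 1 := by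
    intro t ht
    simp only [mem_ball, dist_zero_right, norm_mul, Complex.norm_real, Real.norm_eq_abs]
    calc |t| * ‖z‖ ≤ 1 * ‖z‖ := by
          apply mul_le_mul_of_nonneg_right _ (norm_nonneg z)
          rw [abs_le]; constructor <;> linarith [ht.1, ht.2]
      _ < 1 := by rwa [one_mul]
  have hcont : ContinuousOn (deriv f) (ball (0:ℂ) 1) :=
    ((hf.analyticOnNhd isOpen_ball).deriv).continuousOn
  have hderiv : ∀ t ∈ Set.uIcc (0:ℝ) 1,
      HasDerivAt (fun s : ℝ => f (↑s * z)) (z * deriv f (↑t * z)) t := by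
    intro t ht'
    have ht : t ∈ Set.Icc (0:ℝ) 1 := by
      rwa [Set.uIcc_of_le (by norm_num : (0:ℝ) ≤ 1)] at ht'
    have hfw : HasDerivAt f (deriv f (↑t * z)) (↑t * z) :=
      (hf.differentiableAt (isOpen_ball.mem_nhds (hmem t ht))).hasDerivAt
    have hh : HasDerivAt (fun s : ℝ => (↑s * z : ℂ)) z t := by
      have := (Complex.ofRealCLM.hasDerivAt (x := t)).mul_const z
      simpa using this
    have := HasDerivAt.scomp t hfw hh
    simpa [smul_eq_mul, mul_comm, Function.comp_def] using this
  have hint : IntervalIntegrable (fun t : ℝ => z * deriv f (↑t * z)) MeasureTheory.volume 0 1 := by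
    apply ContinuousOn.intervalIntegrable
    rw [Set.uIcc_of_le (by norm_num : (0:ℝ) ≤ 1)]
    exact continuousOn_const.mul (hcont.comp
      ((Complex.continuous_ofReal.continuousOn.mul continuousOn_const)) hmem)
  have hFTC := intervalIntegral.integral_eq_sub_of_hasDerivAt hderiv hint
  have hg_int : IntervalIntegrable (fun t : ℝ => C * (1 - t) ^ (-α)) MeasureTheory.volume 0 1 := by
    have h1 : IntervalIntegrable (fun t : ℝ => t ^ (-α)) MeasureTheory.volume 0 1 :=
      intervalIntegral.intervalIntegrable_rpow' (by linarith)
    have h2 : IntervalIntegrable (fun t : ℝ => (1 - t) ^ (-α)) MeasureTheory.volume 0 1 := by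
      have := (h1.comp_sub_left 1).symm
      simpa using this
    exact h2.const_mul C
  have hbound : ‖∫ t in (0:ℝ)..1, z * deriv f (↑t * z)‖ ≤
      ∫ t in (0:ℝ)..1, C * (1 - t) ^ (-α) := by
    refine le_trans (intervalIntegral.norm_integral_le_abs_of_norm_le ?_ hg_int) (le_of_eq (abs_of_nonneg (intervalIntegral.integral_nonneg (by norm_num) fun u hu => mul_nonneg hC0 (Real.rpow_nonneg (by linarith [hu.1, hu.2]) _))))
    have hne : ∀ᵐ t : ℝ ∂MeasureTheory.volume.restrict (Set.uIoc (0:ℝ) 1), t ≠ 1 := by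
      refine MeasureTheory.ae_restrict_of_ae ?_
      have h0 : MeasureTheory.volume ({(1:ℝ)} : Set ℝ) = 0 := MeasureTheory.measure_singleton 1
      filter_upwards [MeasureTheory.measure_eq_zero_iff_ae_notMem.mp h0] with t ht
      simpa using ht
    filter_upwards [MeasureTheory.ae_restrict_mem measurableSet_uIoc, hne] with t ht hne1
    rw [Set.uIoc_of_le (by norm_num : (0:ℝ) ≤ 1)] at ht
    have ht0 : 0 < t := ht.1
    have ht1 : t < 1 := lt_of_le_of_ne ht.2 hne1
    have htz : (↑t * z) ∈ ball (0:ℂ) 1 := hmem t ⟨le_of_lt ht0, ht.2⟩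
    have hab : ‖(↑t * z)‖ ≤ t := by
      rw [norm_mul, Complex.norm_real, Real.norm_eq_abs, abs_of_pos ht0]
      nlinarith [norm_nonneg z, hz1]
    have hsq : 1 - t ≤ 1 - ‖(↑t * z)‖ ^ 2 := by
      nlinarith [norm_nonneg (↑t * z), ht.2]
    have hpow : ((1:ℝ) - t) ^ α ≤ (1 - ‖(↑t * z)‖ ^ 2) ^ α :=
      Real.rpow_le_rpow (by linarith) hsq (le_of_lt hα0)
    have hkey : (1 - t) ^ α * ‖deriv f (↑t * z)‖ ≤ C :=
      le_trans (mul_le_mul_of_nonneg_right hpow (norm_nonneg _)) (hC _ htz)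
    have hpos : (0:ℝ) < (1 - t) ^ α := Real.rpow_pos_of_pos (by linarith) α
    have hfd : ‖deriv f (↑t * z)‖ ≤ C * (1 - t) ^ (-α) := by
      rw [Real.rpow_neg (by linarith), ← div_eq_mul_inv, le_div_iff₀ hpos]
      linarith [hkey]
    calc ‖z * deriv f (↑t * z)‖ = ‖z‖ * ‖deriv f (↑t * z)‖ := by
          simp
      _ ≤ 1 * ‖deriv f (↑t * z)‖ :=
          mul_le_mul_of_nonneg_right (le_of_lt hz1) (norm_nonneg _)
      _ ≤ C * (1 - t) ^ (-α) := by rw [one_mul]; exact hfd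
  have hfz : ‖f z - f 0‖ ≤ ∫ t in (0:ℝ)..1, C * (1 - t) ^ (-α) := by
    have : f z - f 0 = ∫ t in (0:ℝ)..1, z * deriv f (↑t * z) := by
      rw [hFTC]; norm_num
    rw [this]
    exact hbound
  calc ‖f z‖ = ‖f 0 + (f z - f 0)‖ := by ring_nf
    _ ≤ ‖f 0‖ + ‖f z - f 0‖ := norm_add_le _ _
    _ ≤ ‖f 0‖ + ∫ t in (0:ℝ)..1, C * (1 - t) ^ (-α) := by linarith
end

section
/- Let φ be a holomorphic self-map of the unit disk with φ(0) = 0 and 0 < |φ'(0)| < 1, and suppose there exist α > 0, M > 0, and a nonnegative integer m such that (1-|z|²)^α |φ'(z)| ≤ M (1-|φ(z)|²)^α for all z ∈ D, and (1-|φ_m(z)|²)^α |φ'(φ_m(z))| ≤ |φ'(0)| · (1-|φ_{m+1}(z)|²)^α for all z ∈ D, where φ_k denotes the k-th iterate of φ. Then for every integer k > m and every z ∈ D, (1-|z|²)^α |φ_k'(z)| ≤ M^m |φ'(0)|^{k-m} (1-|φ_k(z)|²)^α. -/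
open Metric

/-- Iterated derivative estimate under condition (A) and boundedness of `C_φ` on `B_α`. -/
theorem iterate_deriv_estimate (φ : ℂ → ℂ)
    (hφmap : Set.MapsTo φ (ball (0 : ℂ) 1) (ball (0 : ℂ) 1))
    (hφ : DifferentiableOn ℂ φ (ball (0 : ℂ) 1))
    (hφ0 : φ 0 = 0)
    (hd0 : 0 < ‖deriv φ 0‖) (hd1 : ‖deriv φ 0‖ < 1)
    (α M : ℝ) (hα : 0 < α) (hM : 0 < M) (m : ℕ)
    (hbdd : ∀ z ∈ ball (0 : ℂ) 1,
      (1 - ‖z‖ ^ 2) ^ α * ‖deriv φ z‖ ≤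
        M * (1 - ‖φ z‖ ^ 2) ^ α)
    (hA : ∀ z ∈ ball (0 : ℂ) 1,
      (1 - ‖φ^[m] z‖ ^ 2) ^ α * ‖deriv φ (φ^[m] z)‖ ≤
        ‖deriv φ 0‖ * (1 - ‖φ^[m + 1] z‖ ^ 2) ^ α) :
    ∀ k : ℕ, m < k → ∀ z ∈ ball (0 : ℂ) 1,
      (1 - ‖z‖ ^ 2) ^ α * ‖deriv (φ^[k]) z‖ ≤
        M ^ m * ‖deriv φ 0‖ ^ (k - m) *
          (1 - ‖φ^[k] z‖ ^ 2) ^ α := by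
  have hball : ∀ (j : ℕ) (z : ℂ), z ∈ ball (0 : ℂ) 1 → φ^[j] z ∈ ball (0 : ℂ) 1 :=
    fun j z hz => hφmap.iterate j hz
  have hpos : ∀ z ∈ ball (0 : ℂ) 1, 0 < (1 - ‖z‖ ^ 2) ^ α := by
    intro z hz
    have : ‖z‖ < 1 := by simpa using mem_ball_zero_iff.mp hz
    have h2 : ‖z‖ ^ 2 < 1 := by nlinarith [norm_nonneg z]
    exact Real.rpow_pos_of_pos (by linarith) α
  have hdiff : ∀ (j : ℕ) (z : ℂ), z ∈ ball (0 : ℂ) 1 → DifferentiableAt ℂ (φ^[j]) z := by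
    intro j
    induction j with
    | zero => intro z hz; simpa using differentiableAt_id'
    | succ n ih =>
      intro z hz
      rw [Function.iterate_succ']
      exact DifferentiableAt.comp z
        (hφ.differentiableAt (isOpen_ball.mem_nhds (hball n z hz))) (ih z hz)
  have hderiv : ∀ (j : ℕ) (z : ℂ), z ∈ ball (0 : ℂ) 1 →
      deriv (φ^[j + 1]) z = deriv φ (φ^[j] z) * deriv (φ^[j]) z := by
    intro j z hz
    rw [Function.iterate_succ']
    exact deriv_comp z (hφ.differentiableAt (isOpen_ball.mem_nhds (hball j z hz))) (hdiff j z hz)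
  -- boundedness for all iterates
  have hbase : ∀ (j : ℕ), ∀ z ∈ ball (0 : ℂ) 1,
      (1 - ‖z‖ ^ 2) ^ α * ‖deriv (φ^[j]) z‖ ≤
        M ^ j * (1 - ‖φ^[j] z‖ ^ 2) ^ α := by
    intro j
    induction j with
    | zero => intro z hz; simp
    | succ n ih =>
      intro z hz
      rw [hderiv n z hz, norm_mul]
      have h1 := ih z hz
      have h2 := hbdd (φ^[n] z) (hball n z hz)
      rw [← Function.iterate_succ_apply' φ n z] at h2
      have hA1 : 0 ≤ ‖deriv φ (φ^[n] z)‖ := norm_nonneg _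
      have hA2 : 0 ≤ (1 - ‖z‖ ^ 2) ^ α := (hpos z hz).le
      have hA3 : 0 < (1 - ‖φ^[n] z‖ ^ 2) ^ α := hpos _ (hball n z hz)
      calc (1 - ‖z‖ ^ 2) ^ α *
            (‖deriv φ (φ^[n] z)‖ * ‖deriv (φ^[n]) z‖)
          = ((1 - ‖z‖ ^ 2) ^ α * ‖deriv (φ^[n]) z‖) *
              ‖deriv φ (φ^[n] z)‖ := by ring
        _ ≤ (M ^ n * (1 - ‖φ^[n] z‖ ^ 2) ^ α) *
              ‖deriv φ (φ^[n] z)‖ := by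
            exact mul_le_mul_of_nonneg_right h1 hA1
        _ = M ^ n * ((1 - ‖φ^[n] z‖ ^ 2) ^ α *
              ‖deriv φ (φ^[n] z)‖) := by ring
        _ ≤ M ^ n * (M * (1 - ‖φ^[n + 1] z‖ ^ 2) ^ α) := by
            exact mul_le_mul_of_nonneg_left h2 (by positivity)
        _ = M ^ (n + 1) * (1 - ‖φ^[n + 1] z‖ ^ 2) ^ α := by ring
  intro k hk
  induction k, hk using Nat.le_induction with
  | base =>
    intro z hz
    rw [hderiv m z hz, norm_mul]
    have hms : m.succ - m = 1 := by omega
    rw [hms, pow_one]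
    have h1 := hbase m z hz
    have h2 := hA z hz
    have hA1 : 0 ≤ ‖deriv φ (φ^[m] z)‖ := norm_nonneg _
    calc (1 - ‖z‖ ^ 2) ^ α *
          (‖deriv φ (φ^[m] z)‖ * ‖deriv (φ^[m]) z‖)
        = ((1 - ‖z‖ ^ 2) ^ α * ‖deriv (φ^[m]) z‖) *
            ‖deriv φ (φ^[m] z)‖ := by ring
      _ ≤ (M ^ m * (1 - ‖φ^[m] z‖ ^ 2) ^ α) *
            ‖deriv φ (φ^[m] z)‖ := mul_le_mul_of_nonneg_right h1 hA1
      _ = M ^ m * ((1 - ‖φ^[m] z‖ ^ 2) ^ α *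
            ‖deriv φ (φ^[m] z)‖) := by ring
      _ ≤ M ^ m * (‖deriv φ 0‖ * (1 - ‖φ^[m + 1] z‖ ^ 2) ^ α) := by
          exact mul_le_mul_of_nonneg_left h2 (by positivity)
      _ = M ^ m * ‖deriv φ 0‖ * (1 - ‖φ^[m + 1] z‖ ^ 2) ^ α := by ring
  | succ k hmk ih =>
    intro z hz
    have hmk' : m ≤ k := Nat.le_of_succ_le hmk
    rw [hderiv k z hz, norm_mul]
    have h1 := ih z hz
    -- apply hA at w = φ^[k-m] z
    have hw : φ^[k - m] z ∈ ball (0 : ℂ) 1 := hball _ z hz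
    have h2 := hA (φ^[k - m] z) hw
    have e1 : φ^[m] (φ^[k - m] z) = φ^[k] z := by
      rw [← Function.iterate_add_apply, Nat.add_sub_cancel' hmk']
    have e2 : φ^[m + 1] (φ^[k - m] z) = φ^[k + 1] z := by
      rw [← Function.iterate_add_apply]
      congr 1
      omega
    rw [e1, e2] at h2
    have hA1 : 0 ≤ ‖deriv φ (φ^[k] z)‖ := norm_nonneg _
    have epow : (k + 1) - m = (k - m) + 1 := by omega
    calc (1 - ‖z‖ ^ 2) ^ α *
          (‖deriv φ (φ^[k] z)‖ * ‖deriv (φ^[k]) z‖)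
        = ((1 - ‖z‖ ^ 2) ^ α * ‖deriv (φ^[k]) z‖) *
            ‖deriv φ (φ^[k] z)‖ := by ring
      _ ≤ (M ^ m * ‖deriv φ 0‖ ^ (k - m) *
            (1 - ‖φ^[k] z‖ ^ 2) ^ α) * ‖deriv φ (φ^[k] z)‖ :=
          mul_le_mul_of_nonneg_right h1 hA1
      _ = (M ^ m * ‖deriv φ 0‖ ^ (k - m)) *
            ((1 - ‖φ^[k] z‖ ^ 2) ^ α * ‖deriv φ (φ^[k] z)‖) := by ring
      _ ≤ (M ^ m * ‖deriv φ 0‖ ^ (k - m)) *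
            (‖deriv φ 0‖ * (1 - ‖φ^[k + 1] z‖ ^ 2) ^ α) := by
          exact mul_le_mul_of_nonneg_left h2 (by positivity)
      _ = M ^ m * ‖deriv φ 0‖ ^ ((k + 1) - m) *
            (1 - ‖φ^[k + 1] z‖ ^ 2) ^ α := by
          rw [epow, pow_succ]; ring
end

section
/- Let φ be a holomorphic self-map of the unit disk with φ(0) = 0 and 0 < |φ'(0)| < 1, satisfying the hypotheses of Königs so that the normalized iterates σ_k(z) = φ_k(z)/φ'(0)^k converge locally uniformly to the Königs function σ. If there exist α > 0, M > 0, and a nonnegative integer m with (1-|z|²)^α|φ'(z)| ≤ M(1-|φ(z)|²)^α for all z, and (1-|φ_m(z)|²)^α|φ'(φ_m(z))| ≤ |φ'(0)|(1-|φ_{m+1}(z)|²)^α for all z, then σ ∈ B_α, with (1-|z|²)^α |σ'(z)| ≤ M^m / |φ'(0)|^m for all z ∈ D. -/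
open Metric

/-- Under boundedness of `C_φ` on `B_α` and condition (A), the Königs function `σ`
belongs to `B_α` with seminorm at most `M^m / |φ'(0)|^m`. -/
theorem koenigs_in_bloch_type (φ σ : ℂ → ℂ)
    (hφmap : Set.MapsTo φ (ball (0 : ℂ) 1) (ball (0 : ℂ) 1))
    (hφ : DifferentiableOn ℂ φ (ball (0 : ℂ) 1))
    (hφ0 : φ 0 = 0)
    (hd0 : 0 < ‖deriv φ 0‖) (hd1 : ‖deriv φ 0‖ < 1)
    (hσ : DifferentiableOn ℂ σ (ball (0 : ℂ) 1))
    (hkoenigs : TendstoLocallyUniformlyOn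
      (fun (k : ℕ) (z : ℂ) => φ^[k] z / (deriv φ 0) ^ k) σ
      Filter.atTop (ball (0 : ℂ) 1))
    (α M : ℝ) (hα : 0 < α) (hM : 0 < M) (m : ℕ)
    (hbdd : ∀ z ∈ ball (0 : ℂ) 1,
      (1 - ‖z‖ ^ 2) ^ α * ‖deriv φ z‖ ≤
        M * (1 - ‖φ z‖ ^ 2) ^ α)
    (hA : ∀ z ∈ ball (0 : ℂ) 1,
      (1 - ‖φ^[m] z‖ ^ 2) ^ α * ‖deriv φ (φ^[m] z)‖ ≤
        ‖deriv φ 0‖ * (1 - ‖φ^[m + 1] z‖ ^ 2) ^ α) :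
    ∀ z ∈ ball (0 : ℂ) 1,
      (1 - ‖z‖ ^ 2) ^ α * ‖deriv σ z‖ ≤
        M ^ m / ‖deriv φ 0‖ ^ m := by
  intro z hz
  set B := ball (0 : ℂ) 1
  set lam := deriv φ 0 with hlam
  have hlamne : lam ≠ 0 := by
    intro h; rw [h] at hd0; simp at hd0
  -- iterates stay in ball
  have hiter_mem : ∀ (j : ℕ) (w : ℂ), w ∈ B → φ^[j] w ∈ B := fun j w hw =>
    hφmap.iterate j hw
  -- |w| < 1 for w in ball
  have habs : ∀ w : ℂ, w ∈ B → ‖w‖ < 1 := by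
    intro w hw
    simpa [Complex.norm_def] using mem_ball_zero_iff.mp hw
  have hone : ∀ w : ℂ, w ∈ B → (0 : ℝ) < 1 - ‖w‖ ^ 2 := by
    intro w hw
    have h1 : ‖w‖ ^ 2 < 1 := by
      have := habs w hw
      nlinarith [norm_nonneg w]
    linarith
  have honele : ∀ w : ℂ, w ∈ B → (1 - ‖w‖ ^ 2 : ℝ) ^ α ≤ 1 := by
    intro w hw
    apply Real.rpow_le_one (le_of_lt (hone w hw))
    · nlinarith [norm_nonneg w]
    · exact le_of_lt hα
  -- differentiability of φ at points of ball
  have hφat : ∀ w : ℂ, w ∈ B → DifferentiableAt ℂ φ w := fun w hw =>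
    hφ.differentiableAt (isOpen_ball.mem_nhds hw)
  -- derivative of iterates
  have hiter : ∀ (k : ℕ) (w : ℂ), w ∈ B → DifferentiableAt ℂ (φ^[k]) w ∧
      deriv (φ^[k]) w = ∏ j ∈ Finset.range k, deriv φ (φ^[j] w) := by
    intro k
    induction k with
    | zero => intro w _; simpa using differentiableAt_id'
    | succ n ih =>
      intro w hw
      obtain ⟨hdn, hder⟩ := ih w hw
      have hmem : φ^[n] w ∈ B := hiter_mem n w hw
      have h1 : DifferentiableAt ℂ φ (φ^[n] w) := hφat _ hmem
      constructor
      · rw [Function.iterate_succ']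
        exact h1.comp w hdn
      · rw [Function.iterate_succ']
        rw [deriv_comp w h1 hdn, hder, Finset.prod_range_succ]
        ring
  -- Lemma 1: bound with M factors
  have hL1 : ∀ (n : ℕ) (w : ℂ), w ∈ B →
      (1 - ‖w‖ ^ 2) ^ α * ∏ j ∈ Finset.range n, ‖deriv φ (φ^[j] w)‖ ≤
        M ^ n * (1 - ‖φ^[n] w‖ ^ 2) ^ α := by
    intro n
    induction n with
    | zero => intro w _; simp
    | succ n ih =>
      intro w hw
      have hmem : φ^[n] w ∈ B := hiter_mem n w hw
      have key := hbdd _ hmem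
      calc (1 - ‖w‖ ^ 2) ^ α *
            ∏ j ∈ Finset.range (n + 1), ‖deriv φ (φ^[j] w)‖
          = ((1 - ‖w‖ ^ 2) ^ α *
              ∏ j ∈ Finset.range n, ‖deriv φ (φ^[j] w)‖) *
              ‖deriv φ (φ^[n] w)‖ := by
            rw [Finset.prod_range_succ]; ring
        _ ≤ (M ^ n * (1 - ‖φ^[n] w‖ ^ 2) ^ α) *
              ‖deriv φ (φ^[n] w)‖ := by
            apply mul_le_mul_of_nonneg_right (ih w hw) (norm_nonneg _)
        _ = M ^ n * ((1 - ‖φ^[n] w‖ ^ 2) ^ α *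
              ‖deriv φ (φ^[n] w)‖) := by ring
        _ ≤ M ^ n * (M * (1 - ‖φ (φ^[n] w)‖ ^ 2) ^ α) := by
            apply mul_le_mul_of_nonneg_left key (pow_nonneg (le_of_lt hM) n)
        _ = M ^ (n + 1) * (1 - ‖φ^[n + 1] w‖ ^ 2) ^ α := by
            rw [Function.iterate_succ_apply']; ring
  -- Lemma 2: bound with |λ| factors beyond m
  have hL2 : ∀ (t : ℕ) (w : ℂ), w ∈ B →
      (1 - ‖φ^[m] w‖ ^ 2) ^ α *
        ∏ j ∈ Finset.range t, ‖deriv φ (φ^[m + j] w)‖ ≤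
        ‖lam‖ ^ t * (1 - ‖φ^[m + t] w‖ ^ 2) ^ α := by
    intro t
    induction t with
    | zero => intro w _; simp
    | succ t ih =>
      intro w hw
      have hmem : φ^[t] w ∈ B := hiter_mem t w hw
      have key := hA _ hmem
      rw [← Function.iterate_add_apply, ← Function.iterate_add_apply] at key
      calc (1 - ‖φ^[m] w‖ ^ 2) ^ α *
            ∏ j ∈ Finset.range (t + 1), ‖deriv φ (φ^[m + j] w)‖
          = ((1 - ‖φ^[m] w‖ ^ 2) ^ α *
              ∏ j ∈ Finset.range t, ‖deriv φ (φ^[m + j] w)‖) *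
              ‖deriv φ (φ^[m + t] w)‖ := by
            rw [Finset.prod_range_succ]; ring
        _ ≤ (‖lam‖ ^ t * (1 - ‖φ^[m + t] w‖ ^ 2) ^ α) *
              ‖deriv φ (φ^[m + t] w)‖ := by
            apply mul_le_mul_of_nonneg_right (ih w hw) (norm_nonneg _)
        _ = ‖lam‖ ^ t * ((1 - ‖φ^[m + t] w‖ ^ 2) ^ α *
              ‖deriv φ (φ^[m + t] w)‖) := by ring
        _ ≤ ‖lam‖ ^ t *
              (‖lam‖ * (1 - ‖φ^[m + 1 + t] w‖ ^ 2) ^ α) := by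
            apply mul_le_mul_of_nonneg_left key (pow_nonneg (norm_nonneg _) t)
        _ = ‖lam‖ ^ (t + 1) * (1 - ‖φ^[m + (t + 1)] w‖ ^ 2) ^ α := by
            have : m + 1 + t = m + (t + 1) := by ring
            rw [this]; ring
  -- bound on normalized iterates' derivative for k ≥ m
  have hbound : ∀ k : ℕ, m ≤ k →
      (1 - ‖z‖ ^ 2) ^ α *
        ‖deriv (fun w => φ^[k] w / lam ^ k) z‖ ≤
        M ^ m / ‖lam‖ ^ m := by
    intro k hk
    obtain ⟨t, rfl⟩ := Nat.exists_eq_add_of_le hk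
    have hderiv : deriv (fun w => φ^[m + t] w / lam ^ (m + t)) z =
        deriv (φ^[m + t]) z / lam ^ (m + t) := by
      simp [div_eq_mul_inv, deriv_mul_const_field]
    rw [hderiv, (hiter (m + t) z hz).2]
    rw [norm_div, norm_prod, norm_pow]
    have hsplit : ∏ j ∈ Finset.range (m + t), ‖deriv φ (φ^[j] z)‖ =
        (∏ j ∈ Finset.range m, ‖deriv φ (φ^[j] z)‖) *
        ∏ j ∈ Finset.range t, ‖deriv φ (φ^[m + j] z)‖ := by
      rw [Finset.prod_range_add]
    have hlampos : (0 : ℝ) < ‖lam‖ ^ (m + t) := pow_pos hd0 _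
    rw [← mul_div_assoc, div_le_div_iff₀ hlampos (pow_pos hd0 m)]
    have step1 : ((1 - ‖z‖ ^ 2) ^ α *
          ∏ j ∈ Finset.range m, ‖deriv φ (φ^[j] z)‖) *
          ∏ j ∈ Finset.range t, ‖deriv φ (φ^[m + j] z)‖ ≤
        M ^ m * (‖lam‖ ^ t * (1 - ‖φ^[m + t] z‖ ^ 2) ^ α) := by
      calc ((1 - ‖z‖ ^ 2) ^ α *
            ∏ j ∈ Finset.range m, ‖deriv φ (φ^[j] z)‖) *
            ∏ j ∈ Finset.range t, ‖deriv φ (φ^[m + j] z)‖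
          ≤ (M ^ m * (1 - ‖φ^[m] z‖ ^ 2) ^ α) *
            ∏ j ∈ Finset.range t, ‖deriv φ (φ^[m + j] z)‖ := by
            apply mul_le_mul_of_nonneg_right (hL1 m z hz)
            exact Finset.prod_nonneg fun j _ => norm_nonneg _
        _ = M ^ m * ((1 - ‖φ^[m] z‖ ^ 2) ^ α *
            ∏ j ∈ Finset.range t, ‖deriv φ (φ^[m + j] z)‖) := by ring
        _ ≤ M ^ m * (‖lam‖ ^ t * (1 - ‖φ^[m + t] z‖ ^ 2) ^ α) := by
            apply mul_le_mul_of_nonneg_left (hL2 t z hz) (pow_nonneg (le_of_lt hM) m)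
    have step2 : M ^ m * (‖lam‖ ^ t * (1 - ‖φ^[m + t] z‖ ^ 2) ^ α) ≤
        M ^ m * ‖lam‖ ^ t := by
      have hr := honele _ (hiter_mem (m + t) z hz)
      have h2 : ‖lam‖ ^ t * (1 - ‖φ^[m + t] z‖ ^ 2) ^ α ≤
          ‖lam‖ ^ t * 1 :=
        mul_le_mul_of_nonneg_left hr (pow_nonneg (norm_nonneg lam) t)
      rw [mul_one] at h2
      exact mul_le_mul_of_nonneg_left h2 (pow_nonneg hM.le m)
    calc ((1 - ‖z‖ ^ 2) ^ α *
          ∏ j ∈ Finset.range (m + t), ‖deriv φ (φ^[j] z)‖) *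
            ‖lam‖ ^ m
        = (((1 - ‖z‖ ^ 2) ^ α *
            ∏ j ∈ Finset.range m, ‖deriv φ (φ^[j] z)‖) *
            ∏ j ∈ Finset.range t, ‖deriv φ (φ^[m + j] z)‖) *
            ‖lam‖ ^ m := by
          rw [hsplit]; ring
      _ ≤ (M ^ m * (‖lam‖ ^ t * (1 - ‖φ^[m + t] z‖ ^ 2) ^ α)) *
            ‖lam‖ ^ m := by
          apply mul_le_mul_of_nonneg_right step1
          positivity
      _ ≤ (M ^ m * ‖lam‖ ^ t) * ‖lam‖ ^ m := by
          apply mul_le_mul_of_nonneg_right step2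
          positivity
      _ = M ^ m * ‖lam‖ ^ (m + t) := by
          rw [pow_add]; ring
  -- derivatives converge pointwise
  have hdiffF : ∀ᶠ k in Filter.atTop, DifferentiableOn ℂ
      (fun w => φ^[k] w / lam ^ k) B := by
    apply Filter.Eventually.of_forall
    intro k
    have hiterdiff : DifferentiableOn ℂ (φ^[k]) B := fun w hw =>
      ((hiter k w hw).1).differentiableWithinAt
    exact hiterdiff.div_const _
  have hderconv := hkoenigs.deriv hdiffF isOpen_ball
  have hpt : Filter.Tendsto (fun k => deriv (fun w => φ^[k] w / lam ^ k) z)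
      Filter.atTop (nhds (deriv σ z)) := hderconv.tendsto_at hz
  have htend : Filter.Tendsto
      (fun k => (1 - ‖z‖ ^ 2) ^ α *
        ‖deriv (fun w => φ^[k] w / lam ^ k) z‖)
      Filter.atTop (nhds ((1 - ‖z‖ ^ 2) ^ α * ‖deriv σ z‖)) := by
    exact (continuous_norm.continuousAt.tendsto.comp hpt).const_mul _
  apply le_of_tendsto htend
  filter_upwards [Filter.eventually_ge_atTop m] with k hk using hbound k hk
end

section
/- Let φ be a holomorphic self-map of the unit disk with φ(0) = 0 and 0 < |φ'(0)| < 1, and suppose (1-|z|²)·log(2/(1-|z|))·|φ'(z)| ≤ |φ'(0)|·(1-|φ(z)|²)·log(2/(1-|φ(z)|)) for all z ∈ D. Then for every positive integer k and every z ∈ D, (1-|z|²)·|φ_k'(z)|·log(2/(1-|z|)) ≤ 4|φ'(0)|^k, where φ_k is the k-th iterate of φ. -/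
open Metric

/-- Iterated derivative estimate with logarithmic weight. -/
theorem iterate_deriv_log_estimate (φ : ℂ → ℂ)
    (hφmap : Set.MapsTo φ (ball (0 : ℂ) 1) (ball (0 : ℂ) 1))
    (hφ : DifferentiableOn ℂ φ (ball (0 : ℂ) 1))
    (hφ0 : φ 0 = 0)
    (hd0 : 0 < ‖deriv φ 0‖) (hd1 : ‖deriv φ 0‖ < 1)
    (hcond : ∀ z ∈ ball (0 : ℂ) 1,
      (1 - ‖z‖ ^ 2) * Real.log (2 / (1 - ‖z‖)) *
        ‖deriv φ z‖ ≤
      ‖deriv φ 0‖ * ((1 - ‖φ z‖ ^ 2) *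
        Real.log (2 / (1 - ‖φ z‖)))) :
    ∀ k : ℕ, 0 < k → ∀ z ∈ ball (0 : ℂ) 1,
      (1 - ‖z‖ ^ 2) * ‖deriv (φ^[k]) z‖ *
        Real.log (2 / (1 - ‖z‖)) ≤
      4 * ‖deriv φ 0‖ ^ k := by
  have hopen : IsOpen (ball (0:ℂ) 1) := isOpen_ball
  have hdiffIter : ∀ k : ℕ, ∀ z ∈ ball (0:ℂ) 1, DifferentiableAt ℂ (φ^[k]) z := by
    intro k
    induction k with
    | zero => intro z hz; simpa using differentiableAt_id'
    | succ k ih =>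
      intro z hz
      have hw : φ^[k] z ∈ ball (0:ℂ) 1 := Set.MapsTo.iterate hφmap k hz
      have hdw : DifferentiableAt ℂ φ (φ^[k] z) :=
        hφ.differentiableAt (hopen.mem_nhds hw)
      rw [Function.iterate_succ']
      exact hdw.comp z (ih z hz)
  have key : ∀ k : ℕ, ∀ z ∈ ball (0:ℂ) 1,
      (1 - ‖z‖ ^ 2) * Real.log (2 / (1 - ‖z‖)) *
        ‖deriv (φ^[k]) z‖ ≤
      ‖deriv φ 0‖ ^ k * ((1 - ‖φ^[k] z‖ ^ 2) *
        Real.log (2 / (1 - ‖φ^[k] z‖))) := by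
    intro k
    induction k with
    | zero =>
      intro z hz
      simp only [Function.iterate_zero, deriv_id', id_eq, norm_one, mul_one, pow_zero, one_mul]
      exact le_of_eq rfl
    | succ k ih =>
      intro z hz
      have hw : φ^[k] z ∈ ball (0:ℂ) 1 := Set.MapsTo.iterate hφmap k hz
      have hdw : DifferentiableAt ℂ φ (φ^[k] z) :=
        hφ.differentiableAt (hopen.mem_nhds hw)
      have hdit : DifferentiableAt ℂ (φ^[k]) z := hdiffIter k z hz
      have hderiv : deriv (φ^[k+1]) z = deriv φ (φ^[k] z) * deriv (φ^[k]) z := by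
        rw [Function.iterate_succ']
        exact deriv_comp z hdw hdit
      have heq : φ^[k+1] z = φ (φ^[k] z) := Function.iterate_succ_apply' φ k z
      rw [hderiv, norm_mul, heq]
      have h1 := mul_le_mul_of_nonneg_right (ih z hz)
        (norm_nonneg (deriv φ (φ^[k] z)))
      have h2 := mul_le_mul_of_nonneg_left (hcond _ hw)
        (pow_nonneg (norm_nonneg (deriv φ 0)) k)
      calc (1 - ‖z‖ ^ 2) * Real.log (2 / (1 - ‖z‖)) *
            (‖deriv φ (φ^[k] z)‖ * ‖deriv (φ^[k]) z‖)
          = (1 - ‖z‖ ^ 2) * Real.log (2 / (1 - ‖z‖)) *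
              ‖deriv (φ^[k]) z‖ * ‖deriv φ (φ^[k] z)‖ := by ring
        _ ≤ ‖deriv φ 0‖ ^ k * ((1 - ‖φ^[k] z‖ ^ 2) *
              Real.log (2 / (1 - ‖φ^[k] z‖))) *
              ‖deriv φ (φ^[k] z)‖ := h1
        _ = ‖deriv φ 0‖ ^ k * ((1 - ‖φ^[k] z‖ ^ 2) *
              Real.log (2 / (1 - ‖φ^[k] z‖)) *
              ‖deriv φ (φ^[k] z)‖) := by ring
        _ ≤ ‖deriv φ 0‖ ^ k * (‖deriv φ 0‖ *
              ((1 - ‖φ (φ^[k] z)‖ ^ 2) *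
              Real.log (2 / (1 - ‖φ (φ^[k] z)‖)))) := h2
        _ = ‖deriv φ 0‖ ^ (k + 1) * ((1 - ‖φ (φ^[k] z)‖ ^ 2) *
              Real.log (2 / (1 - ‖φ (φ^[k] z)‖))) := by ring
  intro k hk z hz
  have hw : φ^[k] z ∈ ball (0:ℂ) 1 := Set.MapsTo.iterate hφmap k hz
  have ha : ‖φ^[k] z‖ < 1 := by simpa [mem_ball, dist_zero_right] using hw
  have h4 : (1 - ‖φ^[k] z‖ ^ 2) *
      Real.log (2 / (1 - ‖φ^[k] z‖)) ≤ 4 := by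
    set a := ‖φ^[k] z‖ with ha'
    have h0 : 0 ≤ a := norm_nonneg _
    have hpos : 0 < 1 - a := by linarith
    have hlog : Real.log (2 / (1 - a)) ≤ 2 / (1 - a) := by
      have := Real.log_le_sub_one_of_pos (show (0:ℝ) < 2/(1-a) by positivity)
      linarith
    have hlognn : 0 ≤ Real.log (2 / (1 - a)) :=
      Real.log_nonneg (by rw [le_div_iff₀ hpos]; linarith)
    have h12 : 1 - a^2 ≤ 2*(1-a) := by nlinarith
    have h1nn : 0 ≤ 1 - a^2 := by nlinarith
    calc (1-a^2)*Real.log (2/(1-a)) ≤ 2*(1-a) * (2/(1-a)) :=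
        mul_le_mul h12 hlog hlognn (by positivity)
      _ = 4 := by field_simp; ring
  have hkey := key k z hz
  have hc : 0 ≤ ‖deriv φ 0‖ ^ k := pow_nonneg (norm_nonneg _) k
  nlinarith [mul_le_mul_of_nonneg_left h4 hc]
end

section
/- For t ∈ (0,1), define the lens map φ_t(z) = (γ(z)^t − 1)/(γ(z)^t + 1) where γ(z) = (1+z)/(1−z). Then φ_t is a holomorphic self-map of the unit disk with φ_t(0) = 0, φ_t'(0) = t, and its hyperbolic derivative satisfies |φ_t^{(h)}(z)| = (1−|z|²)|φ_t'(z)|/(1−|φ_t(z)|²) ≤ t for all z ∈ D, with equality exactly when z is real. -/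
open Metric

/-- The Cayley transform onto the right half-plane. -/
noncomputable def cayley (z : ℂ) : ℂ := (1 + z) / (1 - z)

/-- The lens map `φ_t`. -/
noncomputable def lens (t : ℝ) (z : ℂ) : ℂ :=
  (cayley z ^ (t : ℂ) - 1) / (cayley z ^ (t : ℂ) + 1)

open Real

lemma one_sub_ne {z : ℂ} (hz : ‖z‖ < 1) : (1 : ℂ) - z ≠ 0 := by
  intro h
  have : z = 1 := by linear_combination -h
  simp [this] at hz

lemma sq_lt_one {z : ℂ} (hz : ‖z‖ < 1) : z.re ^ 2 + z.im ^ 2 < 1 := by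
  have h1 : ‖z‖ ^ 2 < 1 := by nlinarith [norm_nonneg z]
  rw [Complex.sq_norm, Complex.normSq_apply] at h1
  nlinarith

lemma cayley_re_pos {z : ℂ} (hz : ‖z‖ < 1) : 0 < (cayley z).re := by
  have h := one_sub_ne hz
  have hns : 0 < Complex.normSq (1 - z) := Complex.normSq_pos.2 h
  have hz2 := sq_lt_one hz
  rw [cayley, Complex.div_re]
  have hre : (1 + z).re * (1 - z).re / Complex.normSq (1 - z)
      + (1 + z).im * (1 - z).im / Complex.normSq (1 - z)
      = (1 - (z.re ^ 2 + z.im ^ 2)) / Complex.normSq (1 - z) := by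
    rw [← add_div]
    congr 1
    simp [Complex.add_re, Complex.sub_re, Complex.add_im, Complex.sub_im]; ring
  rw [hre]
  exact div_pos (by linarith) hns

lemma cayley_im {z : ℂ} : (cayley z).im = 2 * z.im / Complex.normSq (1 - z) := by
  rw [cayley, Complex.div_im, div_sub_div_same]
  congr 1
  simp [Complex.add_re, Complex.sub_re, Complex.add_im, Complex.sub_im]
  ring

lemma quot_identity (u : ℂ) (hu : 0 < u.re) :
    1 - ‖(u - 1)/(u + 1)‖ ^ 2 = 4 * u.re / ‖u + 1‖ ^ 2 := by
  have h1 : u + 1 ≠ 0 := by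
    intro h; have := congrArg Complex.re h; simp at this; linarith
  have hA : (0:ℝ) < ‖u + 1‖ ^ 2 := by
    have := norm_pos_iff.mpr h1; positivity
  have key : ‖u + 1‖ ^ 2 - ‖u - 1‖ ^ 2 = 4 * u.re := by
    rw [Complex.sq_norm, Complex.sq_norm, Complex.normSq_apply, Complex.normSq_apply]
    simp [Complex.add_re, Complex.sub_re, Complex.add_im, Complex.sub_im]
    ring
  rw [norm_div, div_pow]
  field_simp
  linarith

lemma cpow_re_polar {w : ℂ} (hw : w ≠ 0) (t : ℝ) :
    (w ^ (t:ℂ)).re = ‖w‖ ^ t * Real.cos (t * Complex.arg w) := by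
  rw [Complex.cpow_def_of_ne_zero hw, Complex.exp_re]
  have h1 : (Complex.log w * t).re = Real.log (‖w‖) * t := by
    simp [Complex.mul_re, Complex.log_re, Complex.log_im]
  have h2 : (Complex.log w * t).im = t * Complex.arg w := by
    simp [Complex.mul_im, Complex.log_re, Complex.log_im]; ring
  rw [h1, h2, Real.rpow_def_of_pos (norm_pos_iff.mpr hw), mul_comm (Real.log _) t]

lemma abs_cpow_real {w : ℂ} (hw : w ≠ 0) (c : ℝ) :
    ‖w ^ (c:ℂ)‖ = ‖w‖ ^ c := by
  rw [Complex.norm_cpow_of_ne_zero hw]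
  simp

lemma cos_compare {θ t : ℝ} (hθ : |θ| < π/2) (ht0 : 0 < t) (ht1 : t < 1) :
    Real.cos θ ≤ Real.cos (t*θ) ∧ (Real.cos θ = Real.cos (t*θ) ↔ θ = 0) := by
  have h1 : Real.cos θ = Real.cos |θ| := (Real.cos_abs θ).symm
  have h2 : Real.cos (t*θ) = Real.cos (t*|θ|) := by
    rw [← Real.cos_abs (t*θ), abs_mul, abs_of_pos ht0]
  rcases eq_or_ne θ 0 with h | h
  · simp [h]
  · have habs : 0 < |θ| := abs_pos.2 h
    have hlt : t * |θ| < |θ| := by nlinarith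
    have hs : Real.cos |θ| < Real.cos (t * |θ|) := by
      apply Real.strictAntiOn_cos ⟨by positivity, by nlinarith [Real.pi_pos]⟩
        ⟨abs_nonneg θ, by nlinarith [Real.pi_pos]⟩ hlt
    constructor
    · rw [h1, h2]; linarith
    · constructor
      · intro he; rw [h1, h2] at he; linarith
      · intro he; exact absurd he h

lemma cayley_add_one {z : ℂ} (h : (1:ℂ) - z ≠ 0) : cayley z + 1 = 2 / (1 - z) := by
  rw [cayley]; field_simp; ring

lemma hasDerivAt_lens (t : ℝ) {z : ℂ} (h1 : (1:ℂ) - z ≠ 0)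
    (hre : 0 < (cayley z).re) (hu : cayley z ^ (t:ℂ) + 1 ≠ 0) :
    HasDerivAt (lens t)
      ((t:ℂ) * cayley z ^ ((t:ℂ) - 1) * (cayley z + 1) ^ 2 / (cayley z ^ (t:ℂ) + 1) ^ 2) z := by
  have hc : HasDerivAt cayley (2 / (1 - z) ^ 2) z := by
    have hd : HasDerivAt (fun z : ℂ => (1 + z) / (1 - z))
        ((1 * (1 - z) - (1 + z) * (-1)) / (1 - z) ^ 2) z := by
      exact ((hasDerivAt_id z).const_add 1).div (((hasDerivAt_id z).const_sub 1)) h1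
    convert hd using 1
    · rfl
    field_simp; ring
  have hcp : HasDerivAt (fun z => cayley z ^ (t:ℂ))
      ((t:ℂ) * cayley z ^ ((t:ℂ) - 1) * (2 / (1 - z) ^ 2)) z :=
    hc.cpow_const (Complex.mem_slitPlane_iff.2 (Or.inl hre))
  have hlens : HasDerivAt (lens t)
      ((((t:ℂ) * cayley z ^ ((t:ℂ) - 1) * (2 / (1 - z) ^ 2)) * (cayley z ^ (t:ℂ) + 1)
        - (cayley z ^ (t:ℂ) - 1) * ((t:ℂ) * cayley z ^ ((t:ℂ) - 1) * (2 / (1 - z) ^ 2)))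
        / (cayley z ^ (t:ℂ) + 1) ^ 2) z := by
    exact (hcp.sub_const 1).div (hcp.add_const 1) hu
  convert hlens using 1
  rw [cayley_add_one h1]
  field_simp
  ring

/-- Bundled pointwise facts about the lens map. -/
lemma lens_facts (t : ℝ) (ht0 : 0 < t) (ht1 : t < 1) {z : ℂ} (hz : ‖z‖ < 1) :
    ‖lens t z‖ < 1 ∧
    HasDerivAt (lens t)
      ((t:ℂ) * cayley z ^ ((t:ℂ) - 1) * (cayley z + 1) ^ 2 / (cayley z ^ (t:ℂ) + 1) ^ 2) z ∧
    (1 - ‖z‖ ^ 2) * ‖deriv (lens t) z‖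
      = (4 * t * ‖cayley z‖ ^ t / ‖cayley z ^ (t:ℂ) + 1‖ ^ 2)
        * Real.cos (Complex.arg (cayley z)) ∧
    t * (1 - ‖lens t z‖ ^ 2)
      = (4 * t * ‖cayley z‖ ^ t / ‖cayley z ^ (t:ℂ) + 1‖ ^ 2)
        * Real.cos (t * Complex.arg (cayley z)) ∧
    0 < 4 * t * ‖cayley z‖ ^ t / ‖cayley z ^ (t:ℂ) + 1‖ ^ 2 ∧
    |Complex.arg (cayley z)| < π/2 := by
  set w := cayley z with hwdef
  set u := w ^ (t:ℂ) with hudef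
  have h1 : (1:ℂ) - z ≠ 0 := one_sub_ne hz
  have hwre : 0 < w.re := cayley_re_pos hz
  have hwne : w ≠ 0 := by
    intro h; rw [h] at hwre; simp at hwre
  have hr : 0 < ‖w‖ := norm_pos_iff.mpr hwne
  set θ := Complex.arg w with hθdef
  have hθ : |θ| < π/2 := Complex.abs_arg_lt_pi_div_two_iff.2 (Or.inl hwre)
  have htθ : |t * θ| < π/2 := by
    rw [abs_mul, abs_of_pos ht0]
    rcases eq_or_ne θ 0 with h | h
    · simp [h]; positivity
    · have := abs_pos.2 h; nlinarith
  have hcos_tθ : 0 < Real.cos (t * θ) :=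
    Real.cos_pos_of_mem_Ioo ⟨by cases abs_lt.1 htθ; linarith, (abs_lt.1 htθ).2⟩
  have hure : u.re = ‖w‖ ^ t * Real.cos (t * θ) := cpow_re_polar hwne t
  have hurepos : 0 < u.re := by rw [hure]; positivity
  have hu1 : u + 1 ≠ 0 := by
    intro h; have := congrArg Complex.re h; simp at this; linarith
  have hau1 : 0 < ‖u + 1‖ ^ 2 := by
    have := norm_pos_iff.mpr hu1; positivity
  -- |lens| < 1
  have hquot : 1 - ‖(u - 1)/(u + 1)‖ ^ 2 = 4 * u.re / ‖u + 1‖ ^ 2 :=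
    quot_identity u hurepos
  have hlensdef : lens t z = (u - 1)/(u + 1) := rfl
  have hlenslt : ‖lens t z‖ < 1 := by
    rw [hlensdef]
    have h2 : 0 < 4 * u.re / ‖u + 1‖ ^ 2 := by positivity
    nlinarith [norm_nonneg ((u - 1)/(u + 1))]
  -- z in terms of w
  have hw1 : w + 1 = 2 / (1 - z) := cayley_add_one h1
  have hw1ne : w + 1 ≠ 0 := by
    rw [hw1]; exact div_ne_zero two_ne_zero h1
  have haw1 : 0 < ‖w + 1‖ ^ 2 := by
    have := norm_pos_iff.mpr hw1ne; positivity
  have hzw : z = (w - 1)/(w + 1) := by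
    rw [eq_div_iff hw1ne, hwdef, cayley]
    field_simp
    ring
  have hz_id : 1 - ‖z‖ ^ 2 = 4 * w.re / ‖w + 1‖ ^ 2 := by
    rw [hzw] at *
    exact quot_identity w hwre
  -- derivative
  have hder := hasDerivAt_lens t h1 hwre hu1
  have hderiv : deriv (lens t) z
      = (t:ℂ) * w ^ ((t:ℂ) - 1) * (w + 1) ^ 2 / (u + 1) ^ 2 := hder.deriv
  have hcast : ((t:ℂ) - 1) = (((t - 1 : ℝ)):ℂ) := by push_cast; ring
  have habsder : ‖deriv (lens t) z‖
      = t * ‖w‖ ^ (t - 1) * ‖w + 1‖ ^ 2 / ‖u + 1‖ ^ 2 := by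
    rw [hderiv, norm_div, norm_mul, norm_mul, norm_pow, norm_pow, hcast,
      abs_cpow_real hwne, Complex.norm_real, Real.norm_eq_abs, abs_of_pos ht0]
  have hwre_eq : w.re = ‖w‖ * Real.cos θ := by
    have := Complex.cos_arg hwne
    rw [this]
    field_simp
  have hrpow : ‖w‖ * ‖w‖ ^ (t - 1) = ‖w‖ ^ t := by
    nth_rewrite 1 [← Real.rpow_one (‖w‖)]
    rw [← Real.rpow_add hr]
    norm_num
  refine ⟨hlenslt, hder, ?_, ?_, by positivity, hθ⟩
  · rw [hz_id, habsder]
    field_simp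
    rw [hwre_eq, ← hrpow]
    ring
  · rw [hlensdef, hquot, hure]
    field_simp

lemma arg_cayley_eq_zero_iff {z : ℂ} (hz : ‖z‖ < 1) :
    Complex.arg (cayley z) = 0 ↔ z.im = 0 := by
  have hwre := cayley_re_pos hz
  have hns : 0 < Complex.normSq (1 - z) := Complex.normSq_pos.2 (one_sub_ne hz)
  rw [Complex.arg_eq_zero_iff]
  constructor
  · rintro ⟨-, him⟩
    rw [cayley_im] at him
    have : 2 * z.im = 0 := by
      field_simp at him
      simpa using him
    linarith
  · intro him
    refine ⟨hwre.le, ?_⟩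
    rw [cayley_im, him]
    simp

/-- Properties of the lens maps: `φ_t` is a holomorphic self-map of the disk fixing `0`,
with `φ_t'(0) = t`, and its hyperbolic derivative is at most `t`, with equality
precisely on the real diameter. -/
theorem lens_map_properties (t : ℝ) (ht0 : 0 < t) (ht1 : t < 1) :
    Set.MapsTo (lens t) (ball (0 : ℂ) 1) (ball (0 : ℂ) 1) ∧
    DifferentiableOn ℂ (lens t) (ball (0 : ℂ) 1) ∧
    lens t 0 = 0 ∧
    deriv (lens t) 0 = (t : ℂ) ∧
    (∀ z ∈ ball (0 : ℂ) 1,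
      (1 - ‖z‖ ^ 2) * ‖deriv (lens t) z‖ ≤
        t * (1 - ‖lens t z‖ ^ 2)) ∧
    (∀ z ∈ ball (0 : ℂ) 1,
      ((1 - ‖z‖ ^ 2) * ‖deriv (lens t) z‖ =
        t * (1 - ‖lens t z‖ ^ 2) ↔ z.im = 0)) := by
  have hmem : ∀ z : ℂ, z ∈ ball (0 : ℂ) 1 ↔ ‖z‖ < 1 := by
    intro z
    rw [mem_ball_zero_iff]
  have hc0 : cayley 0 = 1 := by simp [cayley]
  refine ⟨?_, ?_, ?_, ?_, ?_, ?_⟩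
  · intro z hz
    rw [hmem] at hz ⊢
    exact (lens_facts t ht0 ht1 hz).1
  · intro z hz
    rw [hmem] at hz
    exact ((lens_facts t ht0 ht1 hz).2.1).differentiableAt.differentiableWithinAt
  · simp [lens, hc0, Complex.one_cpow]
  · have h := ((lens_facts t ht0 ht1 (z := 0) (by simp)).2.1).deriv
    rw [h, hc0, Complex.one_cpow, Complex.one_cpow]
    norm_num
  · intro z hz
    rw [hmem] at hz
    obtain ⟨-, -, hL, hR, hcpos, hθ⟩ := lens_facts t ht0 ht1 hz
    rw [hL, hR]
    have := (cos_compare hθ ht0 ht1).1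
    nlinarith
  · intro z hz
    rw [hmem] at hz
    obtain ⟨-, -, hL, hR, hcpos, hθ⟩ := lens_facts t ht0 ht1 hz
    rw [hL, hR]
    have hiff := (cos_compare hθ ht0 ht1).2
    constructor
    · intro h
      have h2 := mul_left_cancel₀ (ne_of_gt hcpos) h
      exact (arg_cayley_eq_zero_iff hz).1 (hiff.1 h2)
    · intro h
      rw [hiff.2 ((arg_cayley_eq_zero_iff hz).2 h)]
end

section
/- Let φ be a holomorphic self-map of the unit disk with φ(0)=0 and 0<|φ'(0)|<1, let u be holomorphic on D with u(0) ≠ 0, and suppose β > 0 with |u(z)|·(1−|z|²)^β ≤ |u(0)|·(1−|φ(z)|²)^β for all z ∈ D. Define v_k(z) = u(z)u(φ(z))···u(φ_{k−1}(z))/u(0)^k. Then (1−|z|²)^β |v_k(z)| ≤ 1 for all z ∈ D and all positive integers k; consequently, if v_k → v pointwise, then sup_{z∈D}(1−|z|²)^β|v(z)| ≤ 1. -/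
open Metric

/-- Growth bound for the partial products `v_k` of the principal eigenfunction of a
weighted composition operator, and for the limit function `v`. -/
theorem weighted_eigenfunction_growth (φ u : ℂ → ℂ)
    (hφmap : Set.MapsTo φ (ball (0 : ℂ) 1) (ball (0 : ℂ) 1))
    (hφ : DifferentiableOn ℂ φ (ball (0 : ℂ) 1))
    (hφ0 : φ 0 = 0)
    (hd0 : 0 < ‖deriv φ 0‖) (hd1 : ‖deriv φ 0‖ < 1)
    (hu : DifferentiableOn ℂ u (ball (0 : ℂ) 1)) (hu0 : u 0 ≠ 0)
    (β : ℝ) (hβ : 0 < β)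
    (hcond : ∀ z ∈ ball (0 : ℂ) 1,
      ‖u z‖ * (1 - ‖z‖ ^ 2) ^ β ≤
        ‖u 0‖ * (1 - ‖φ z‖ ^ 2) ^ β) :
    (∀ k : ℕ, 0 < k → ∀ z ∈ ball (0 : ℂ) 1,
      (1 - ‖z‖ ^ 2) ^ β *
        ‖(∏ i ∈ Finset.range k, u (φ^[i] z)) / u 0 ^ k‖ ≤ 1) ∧
    (∀ v : ℂ → ℂ,
      (∀ z ∈ ball (0 : ℂ) 1, Filter.Tendsto
        (fun k : ℕ => (∏ i ∈ Finset.range k, u (φ^[i] z)) / u 0 ^ k)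
        Filter.atTop (nhds (v z))) →
      ∀ z ∈ ball (0 : ℂ) 1, (1 - ‖z‖ ^ 2) ^ β * ‖v z‖ ≤ 1) := by
  have hmem : ∀ z ∈ ball (0 : ℂ) 1, ∀ k : ℕ, φ^[k] z ∈ ball (0 : ℂ) 1 := by
    intro z hz k
    induction k with
    | zero => simpa using hz
    | succ n ih => rw [Function.iterate_succ_apply']; exact hφmap ih
  have hpos : ∀ w ∈ ball (0 : ℂ) 1, 0 < 1 - ‖w‖ ^ 2 := by
    intro w hw
    have : ‖w‖ < 1 := by simpa using hw
    nlinarith [norm_nonneg w]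
  have key : ∀ k : ℕ, ∀ z ∈ ball (0 : ℂ) 1,
      (1 - ‖z‖ ^ 2) ^ β * ∏ i ∈ Finset.range k, ‖u (φ^[i] z)‖
        ≤ ‖u 0‖ ^ k * (1 - ‖φ^[k] z‖ ^ 2) ^ β := by
    intro k
    induction k with
    | zero => intro z hz; simp
    | succ n ih =>
      intro z hz
      have hn := hmem z hz n
      have h1 : (0:ℝ) ≤ (1 - ‖φ^[n] z‖ ^ 2) ^ β :=
        Real.rpow_nonneg (hpos _ hn).le β
      calc (1 - ‖z‖ ^ 2) ^ β *
            ∏ i ∈ Finset.range (n + 1), ‖u (φ^[i] z)‖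
          = (1 - ‖z‖ ^ 2) ^ β *
            (∏ i ∈ Finset.range n, ‖u (φ^[i] z)‖) *
            ‖u (φ^[n] z)‖ := by
            rw [Finset.prod_range_succ]; ring
        _ ≤ (‖u 0‖ ^ n * (1 - ‖φ^[n] z‖ ^ 2) ^ β) *
            ‖u (φ^[n] z)‖ :=
            mul_le_mul_of_nonneg_right (ih z hz) (norm_nonneg _)
        _ = ‖u 0‖ ^ n *
            (‖u (φ^[n] z)‖ * (1 - ‖φ^[n] z‖ ^ 2) ^ β) := by ring
        _ ≤ ‖u 0‖ ^ n *
            (‖u 0‖ * (1 - ‖φ (φ^[n] z)‖ ^ 2) ^ β) :=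
            mul_le_mul_of_nonneg_left (hcond _ hn) (by positivity)
        _ = ‖u 0‖ ^ (n + 1) *
            (1 - ‖φ^[n + 1] z‖ ^ 2) ^ β := by
            rw [Function.iterate_succ_apply']; ring
  have main : ∀ k : ℕ, ∀ z ∈ ball (0 : ℂ) 1,
      (1 - ‖z‖ ^ 2) ^ β *
        ‖(∏ i ∈ Finset.range k, u (φ^[i] z)) / u 0 ^ k‖ ≤ 1 := by
    intro k z hz
    have hk := hmem z hz k
    have habs : ‖(∏ i ∈ Finset.range k, u (φ^[i] z)) / u 0 ^ k‖
        = (∏ i ∈ Finset.range k, ‖u (φ^[i] z)‖) / ‖u 0‖ ^ k := by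
      rw [norm_div, norm_pow, norm_prod]
    rw [habs]
    have hu0' : (0:ℝ) < ‖u 0‖ ^ k := pow_pos (norm_pos_iff.mpr hu0) k
    rw [← mul_div_assoc, div_le_one hu0']
    calc (1 - ‖z‖ ^ 2) ^ β * ∏ i ∈ Finset.range k, ‖u (φ^[i] z)‖
        ≤ ‖u 0‖ ^ k * (1 - ‖φ^[k] z‖ ^ 2) ^ β := key k z hz
      _ ≤ ‖u 0‖ ^ k * 1 := by
          apply mul_le_mul_of_nonneg_left _ (by positivity)
          exact Real.rpow_le_one (hpos _ hk).le (by nlinarith [norm_nonneg (φ^[k] z)]) hβ.le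
      _ = ‖u 0‖ ^ k := mul_one _
  refine ⟨fun k _ => main k, fun v hv z hz => ?_⟩
  have ht : Filter.Tendsto
      (fun k : ℕ => (1 - ‖z‖ ^ 2) ^ β *
        ‖(∏ i ∈ Finset.range k, u (φ^[i] z)) / u 0 ^ k‖)
      Filter.atTop (nhds ((1 - ‖z‖ ^ 2) ^ β * ‖v z‖)) :=
    ((continuous_norm.tendsto _).comp (hv z hz)).const_mul _
  exact le_of_tendsto ht (Filter.Eventually.of_forall fun k => main k z hz)
end

section
/- Let φ be a holomorphic self-map of the unit disk with φ(0)=0 and 0<|φ'(0)|<1, such that the hyperbolic derivative satisfies |φ^{(h)}(z)| = (1−|z|²)|φ'(z)|/(1−|φ(z)|²) ≤ |φ'(0)| for all z ∈ D. Then the Königs function σ of φ satisfies (1−|z|²)|σ'(z)| ≤ 1 for all z ∈ D, i.e. σ is in the Bloch space with Bloch seminorm at most 1. -/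
open Metric

/-- If the hyperbolic derivative of `φ` is bounded by `|φ'(0)|`, the Königs function
of `φ` lies in the Bloch space with seminorm at most `1`. -/
theorem koenigs_bloch_seminorm_le_one (φ σ : ℂ → ℂ)
    (hφmap : Set.MapsTo φ (ball (0 : ℂ) 1) (ball (0 : ℂ) 1))
    (hφ : DifferentiableOn ℂ φ (ball (0 : ℂ) 1))
    (hφ0 : φ 0 = 0)
    (hd0 : 0 < ‖deriv φ 0‖) (hd1 : ‖deriv φ 0‖ < 1)
    (hhyp : ∀ z ∈ ball (0 : ℂ) 1,
      (1 - ‖z‖ ^ 2) * ‖deriv φ z‖ ≤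
        ‖deriv φ 0‖ * (1 - ‖φ z‖ ^ 2))
    (hσ : DifferentiableOn ℂ σ (ball (0 : ℂ) 1))
    (hkoenigs : TendstoLocallyUniformlyOn
      (fun (k : ℕ) (z : ℂ) => φ^[k] z / (deriv φ 0) ^ k) σ
      Filter.atTop (ball (0 : ℂ) 1)) :
    ∀ z ∈ ball (0 : ℂ) 1,
      (1 - ‖z‖ ^ 2) * ‖deriv σ z‖ ≤ 1 := by
  set lam := deriv φ 0 with hlam
  -- iterates map ball to ball and are differentiable
  have hmapk : ∀ k : ℕ, Set.MapsTo (φ^[k]) (ball (0 : ℂ) 1) (ball (0 : ℂ) 1) := by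
    intro k
    induction k with
    | zero => simpa using Set.mapsTo_id _
    | succ k ih => rw [Function.iterate_succ]; exact ih.comp hφmap
  have hdiffk : ∀ k : ℕ, DifferentiableOn ℂ (φ^[k]) (ball (0 : ℂ) 1) := by
    intro k
    induction k with
    | zero => simpa using differentiableOn_id
    | succ k ih => rw [Function.iterate_succ']; exact hφ.comp ih (hmapk k)
  -- key estimate by induction
  have key : ∀ k : ℕ, ∀ z ∈ ball (0 : ℂ) 1,
      (1 - ‖z‖ ^ 2) * ‖deriv (φ^[k]) z‖ ≤
        ‖lam‖ ^ k * (1 - ‖φ^[k] z‖ ^ 2) := by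
    intro k
    induction k with
    | zero =>
      intro z hz
      simp
    | succ k ih =>
      intro z hz
      have hφz : φ z ∈ ball (0 : ℂ) 1 := hφmap hz
      have hdφ : DifferentiableAt ℂ φ z := hφ.differentiableAt (isOpen_ball.mem_nhds hz)
      have hdk : DifferentiableAt ℂ (φ^[k]) (φ z) :=
        (hdiffk k).differentiableAt (isOpen_ball.mem_nhds hφz)
      have hchain : deriv (φ^[k + 1]) z = deriv (φ^[k]) (φ z) * deriv φ z := by
        rw [Function.iterate_succ]
        exact deriv_comp z hdk hdφ
      have h1 := hhyp z hz
      have h2 := ih (φ z) hφz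
      rw [hchain, norm_mul]
      have hb : (0 : ℝ) ≤ ‖deriv (φ^[k]) (φ z)‖ := norm_nonneg _
      calc (1 - ‖z‖ ^ 2) *
            (‖deriv (φ^[k]) (φ z)‖ * ‖deriv φ z‖)
          = ‖deriv (φ^[k]) (φ z)‖ *
              ((1 - ‖z‖ ^ 2) * ‖deriv φ z‖) := by ring
        _ ≤ ‖deriv (φ^[k]) (φ z)‖ *
              (‖lam‖ * (1 - ‖φ z‖ ^ 2)) :=
            mul_le_mul_of_nonneg_left h1 hb
        _ = ‖lam‖ *
              ((1 - ‖φ z‖ ^ 2) * ‖deriv (φ^[k]) (φ z)‖) := by ring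
        _ ≤ ‖lam‖ *
              (‖lam‖ ^ k * (1 - ‖φ^[k] (φ z)‖ ^ 2)) :=
            mul_le_mul_of_nonneg_left h2 (norm_nonneg _)
        _ = ‖lam‖ ^ (k + 1) * (1 - ‖φ^[k] (φ z)‖ ^ 2) := by ring
        _ = ‖lam‖ ^ (k + 1) * (1 - ‖φ^[k + 1] z‖ ^ 2) := by
            rw [Function.iterate_succ, Function.comp_apply]
  intro z hz
  -- derivative of the approximants
  have hderivk : ∀ k : ℕ,
      deriv (fun w => φ^[k] w / lam ^ k) z = deriv (φ^[k]) z / lam ^ k := by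
    intro k
    exact deriv_div_const _
  have hbound : ∀ k : ℕ,
      (1 - ‖z‖ ^ 2) * ‖deriv (fun w => φ^[k] w / lam ^ k) z‖ ≤ 1 := by
    intro k
    rw [hderivk k, norm_div, norm_pow]
    have hlampos : (0 : ℝ) < ‖lam‖ ^ k := pow_pos hd0 k
    rw [← mul_div_assoc, div_le_one hlampos]
    calc (1 - ‖z‖ ^ 2) * ‖deriv (φ^[k]) z‖
        ≤ ‖lam‖ ^ k * (1 - ‖φ^[k] z‖ ^ 2) := key k z hz
      _ ≤ ‖lam‖ ^ k * 1 := by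
          apply mul_le_mul_of_nonneg_left _ (le_of_lt hlampos)
          have := sq_nonneg (‖φ^[k] z‖)
          linarith
      _ = ‖lam‖ ^ k := mul_one _
  -- derivatives converge
  have hdconv := hkoenigs.deriv
    (Filter.Eventually.of_forall fun k => ((hdiffk k).div_const _))
    isOpen_ball
  have hpt : Filter.Tendsto (fun k => deriv (fun w => φ^[k] w / lam ^ k) z)
      Filter.atTop (nhds (deriv σ z)) := hdconv.tendsto_at hz
  have hall : Filter.Tendsto
      (fun k => (1 - ‖z‖ ^ 2) *
        ‖deriv (fun w => φ^[k] w / lam ^ k) z‖)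
      Filter.atTop (nhds ((1 - ‖z‖ ^ 2) * ‖deriv σ z‖)) :=
    (Filter.Tendsto.const_mul _ ((continuous_norm.tendsto _).comp hpt))
  exact le_of_tendsto' hall hbound
end
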